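/- A bijection f : {0,1}^n → {0,1}^n satisfies d_H(f(x^n), f(y^n)) = d_H(x^n, y^n) for all x^n, y^n ∈ {0,1}^n if and only if f is a signed coordinate permutation, i.e., there exist a permutation σ of {1,…,n} and a vector b ∈ {0,1}^n such that f(x^n)_i = x_{σ(i)} ⊕ b_i for all x^n and all i. -/

import Mathlib

open Finset

/-- unit vector -/
private def ee {n : ℕ} (j : Fin n) : Fin n → Bool := fun i => decide (i = j)

private lemma dist_ee {n : ℕ} (u : Fin n → Bool) (k : Fin n) :
    hammingDist u (ee k) + 2 * (cond (u k) 1 0) =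
      hammingDist u (fun _ => false) + 1 := by
  classical
  have hmem : k ∈ (univ : Finset (Fin n)) := mem_univ k
  unfold hammingDist
  rw [card_filter, card_filter, ← Finset.add_sum_erase _ _ hmem,
    ← Finset.add_sum_erase _ _ hmem]
  have hsum : ∑ i ∈ univ.erase k, (if u i ≠ ee k i then 1 else 0) =
      ∑ i ∈ univ.erase k, (if u i ≠ false then 1 else 0) := by
    apply Finset.sum_congr rfl
    intro i hi
    have : i ≠ k := (Finset.mem_erase.mp hi).1
    simp [ee, this]
  rw [hsum]
  have : ee k k = true := by simp [ee]
  rw [this]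
  cases h : u k <;> simp <;> omega

private lemma eq_ee_of_wt_one {n : ℕ} (u : Fin n → Bool)
    (h : hammingDist u (fun _ => false) = 1) : ∃ k, u = ee k := by
  classical
  unfold hammingDist at h
  obtain ⟨k, hk⟩ := Finset.card_eq_one.mp h
  refine ⟨k, funext fun i => ?_⟩
  by_cases hu : u i = true
  · have hmem : i ∈ Finset.univ.filter (fun i => u i ≠ (fun _ => false : Fin n → Bool) i) := by
      simp [hu]
    rw [hk, Finset.mem_singleton] at hmem
    subst hmem
    simp [ee, hu]
  · have hmem : i ∉ Finset.univ.filter (fun i => u i ≠ (fun _ => false : Fin n → Bool) i) := by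
      simp [hu]
    rw [hk, Finset.mem_singleton] at hmem
    simp only [Bool.not_eq_true] at hu
    simp [ee, hmem, hu]

private lemma wt_ee {n : ℕ} (j : Fin n) :
    hammingDist (ee j) (fun _ => false) = 1 := by
  classical
  unfold hammingDist
  have : Finset.univ.filter (fun i => ee j i ≠ false) = {j} := by
    ext i; simp [ee]
  rw [this, Finset.card_singleton]

/-- Lemma 4 of the paper: a bijection of the Hamming cube preserves the
Hamming distance iff it is a signed coordinate permutation
`x ↦ (x_{σ(1)} ⊕ b_1, …, x_{σ(n)} ⊕ b_n)`. -/
theorem stmt6 {n : ℕ} (f : (Fin n → Bool) → (Fin n → Bool))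
    (hf : Function.Bijective f) :
    (∀ x y : Fin n → Bool, hammingDist (f x) (f y) = hammingDist x y)
      ↔ ∃ (σ : Equiv.Perm (Fin n)) (b : Fin n → Bool),
          ∀ (x : Fin n → Bool) (i : Fin n), f x i = xor (x (σ i)) (b i) := by
  classical
  constructor
  · intro hd
    set Z : Fin n → Bool := fun _ => false with hZ
    set b : Fin n → Bool := f Z with hb
    set g : (Fin n → Bool) → (Fin n → Bool) := fun x i => xor (f x i) (b i) with hg
    have hgd : ∀ x y, hammingDist (g x) (g y) = hammingDist x y := by
      intro x y
      rw [← hd x y]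
      unfold hammingDist
      congr 1
      apply Finset.filter_congr
      intro i _
      simp only [hg]
      cases f x i <;> cases f y i <;> cases b i <;> simp
    have hgZ : g Z = Z := by
      funext i; simp [hg, hb]; rfl
    have hwt : ∀ x, hammingDist (g x) Z = hammingDist x Z := by
      intro x
      conv_lhs => rw [← hgZ]
      exact hgd x Z
    have hunit : ∀ j, ∃ k, g (ee j) = ee k := by
      intro j
      apply eq_ee_of_wt_one
      rw [show (fun _ => false : Fin n → Bool) = Z from rfl, hwt, hZ]
      exact wt_ee j
    choose k hk using hunit
    have hginj : Function.Injective g := by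
      intro x y hxy
      apply hf.injective
      funext i
      have h := congrFun hxy i
      simp only [hg] at h
      cases hbi : b i <;> simp [hbi] at h <;> exact h
    have heinj : Function.Injective (ee (n := n)) := by
      intro j j' h
      have := congrFun h j
      simpa [ee] using this
    have hkinj : Function.Injective k := by
      intro j j' h
      apply heinj
      apply hginj
      rw [hk, hk, h]
    have hkbij : Function.Bijective k := Finite.injective_iff_bijective.mp hkinj
    set σ : Equiv.Perm (Fin n) := (Equiv.ofBijective k hkbij).symm with hσ
    have main : ∀ (x : Fin n → Bool) (j : Fin n), g x (k j) = x j := by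
      intro x j
      have h1 := dist_ee (g x) (k j)
      have h2 := dist_ee x j
      have h3 : hammingDist (g x) (ee (k j)) = hammingDist x (ee j) := by
        rw [← hk j]; exact hgd x (ee j)
      have hw := hwt x
      rw [show (fun _ => false : Fin n → Bool) = Z from rfl] at h1 h2
      rw [h3, hw] at h1
      cases h : g x (k j) <;> cases h' : x j <;> rw [h] at h1 <;> rw [h'] at h2 <;>
        simp at h1 h2 <;> omega
    refine ⟨σ, b, fun x i => ?_⟩
    have hki : k (σ i) = i := by
      show (Equiv.ofBijective k hkbij) (σ i) = i
      rw [hσ]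
      exact (Equiv.ofBijective k hkbij).apply_symm_apply i
    have h := main x (σ i)
    rw [hki] at h
    have : g x i = xor (f x i) (b i) := rfl
    rw [this] at h
    cases hbi : b i <;> rw [hbi] at h <;> simp at h <;> simp [hbi, ← h]
  · rintro ⟨σ, b, h⟩ x y
    unfold hammingDist
    have hfil : (Finset.univ.filter fun i => f x i ≠ f y i) =
        (Finset.univ.filter fun i => x (σ i) ≠ y (σ i)) := by
      apply Finset.filter_congr
      intro i _
      rw [h, h]
      cases x (σ i) <;> cases y (σ i) <;> cases b i <;> simp
    rw [hfil]
    apply Finset.card_bij' (fun i _ => σ i) (fun i _ => σ.symm i) <;>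
      intro i hi <;> simp_all
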